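/- Let G be a group generated by a family X = (x_1, …, x_n) and let k ≥ 1. Any element of G that is conjugate to a product of k palindromes is itself a product of k palindromes if k is even, and a product of k+1 palindromes if k is odd. -/

import Mathlib

/-- The element of `G` represented by a word in the alphabet `X^{±1}`:
a letter `(i, true)` stands for `X i` and `(i, false)` for `(X i)⁻¹`. -/
def evalWord {G : Type*} {n : ℕ} [Group G] (X : Fin n → G) (w : List (Fin n × Bool)) : G :=
  (w.map fun l => if l.2 then X l.1 else (X l.1)⁻¹).prod

/-- `g` is a palindrome with respect to the generating family `X` if it is represented by
some word whose sequence of letters equals its reverse. -/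
def IsPalindrome {G : Type*} {n : ℕ} [Group G] (X : Fin n → G) (g : G) : Prop :=
  ∃ w : List (Fin n × Bool), w.reverse = w ∧ evalWord X w = g

/-- `g` is a product of `k` palindromes with respect to `X`. -/
def IsPalProd {G : Type*} {n : ℕ} [Group G] (X : Fin n → G) (k : ℕ) (g : G) : Prop :=
  ∃ f : Fin k → G, (∀ i, IsPalindrome X (f i)) ∧ (List.ofFn f).prod = g

/-- The palindromic length of `g` with respect to `X`, valued in `ℕ∞`. -/
noncomputable def palLength {G : Type*} {n : ℕ} [Group G] (X : Fin n → G) (g : G) : ℕ∞ :=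
  sInf {k : ℕ∞ | ∃ m : ℕ, k = (m : ℕ∞) ∧ IsPalProd X m g}

/-- The palindromic width of `G` with respect to `X`, valued in `ℕ∞`. -/
noncomputable def palWidth {G : Type*} {n : ℕ} [Group G] (X : Fin n → G) : ℕ∞ :=
  ⨆ g : G, palLength X g

section Aux
variable {G : Type*} {n : ℕ} [Group G] (X : Fin n → G)

lemma evalWord_append (u v : List (Fin n × Bool)) :
    evalWord X (u ++ v) = evalWord X u * evalWord X v := by
  simp [evalWord]

lemma evalWord_inv (w : List (Fin n × Bool)) :
    evalWord X ((w.map fun l => (l.1, !l.2)).reverse) = (evalWord X w)⁻¹ := by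
  induction w with
  | nil => simp [evalWord]
  | cons l w ih =>
    simp only [List.map_cons, List.reverse_cons]
    rw [evalWord_append, ih]
    cases hb : l.2 <;> simp [evalWord, hb, mul_assoc]

lemma exists_word (hX : Subgroup.closure (Set.range X) = ⊤) (g : G) :
    ∃ u : List (Fin n × Bool), evalWord X u = g := by
  have hg : g ∈ Submonoid.closure (Set.range X ∪ (Set.range X)⁻¹) := by
    rw [← Subgroup.closure_toSubmonoid]
    exact hX ▸ Subgroup.mem_top g
  obtain ⟨l, hl, hprod⟩ := Submonoid.exists_list_of_mem_closure hg
  clear hg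
  induction l generalizing g with
  | nil => exact ⟨[], by simpa [evalWord] using hprod⟩
  | cons y l ih =>
    obtain ⟨u, hu⟩ := ih l.prod (fun x hx => hl x (List.mem_cons_of_mem _ hx)) rfl
    rcases hl y List.mem_cons_self with ⟨i, hi⟩ | hy
    · exact ⟨(i, true) :: u, by simp [evalWord] at hu ⊢; rw [hu, hi, ← hprod]; simp⟩
    · obtain ⟨i, hi⟩ := Set.mem_inv.mp hy
      refine ⟨(i, false) :: u, ?_⟩
      simp [evalWord] at hu ⊢
      rw [hu, ← hprod]
      simp [hi]

lemma pal_rpc {u w : List (Fin n × Bool)} (hw : w.reverse = w) :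
    IsPalindrome X (evalWord X u.reverse * evalWord X w * evalWord X u) := by
  exact ⟨u.reverse ++ w ++ u, by simp [hw], by simp [evalWord_append, mul_assoc]⟩

lemma pal_cpr {u w : List (Fin n × Bool)} (hw : w.reverse = w) :
    IsPalindrome X ((evalWord X u)⁻¹ * evalWord X w * (evalWord X u.reverse)⁻¹) := by
  refine ⟨(u.map fun l => (l.1, !l.2)).reverse ++ w ++ (u.reverse.map fun l => (l.1, !l.2)).reverse, ?_, ?_⟩
  · simp [hw, List.map_reverse]
  · rw [evalWord_append, evalWord_append, evalWord_inv, evalWord_inv]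

lemma pal_rc (u : List (Fin n × Bool)) :
    IsPalindrome X (evalWord X u.reverse * evalWord X u) := by
  exact ⟨u.reverse ++ u, by simp, by simp [evalWord_append]⟩

/-- Key induction: alternating conjugation trick. -/
lemma key (u : List (Fin n × Bool)) (L : List G) (hL : ∀ p ∈ L, IsPalindrome X p) :
    ∃ M : List G, M.length = L.length ∧ (∀ q ∈ M, IsPalindrome X q) ∧
      M.prod = (if Even L.length then (evalWord X u)⁻¹ else evalWord X u.reverse) *
        L.prod * evalWord X u := by
  set c := evalWord X u with hc
  set r := evalWord X u.reverse with hr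
  induction L with
  | nil => exact ⟨[], rfl, by simp, by simp⟩
  | cons p L ih =>
    obtain ⟨M, hlen, hpal, hprod⟩ := ih (fun q hq => hL q (List.mem_cons_of_mem _ hq))
    obtain ⟨w, hwrev, hwe⟩ := hL p List.mem_cons_self
    by_cases hpar : Even L.length
    · -- L even, p::L odd: head = r * p * c
      refine ⟨(r * p * c) :: M, by simp [hlen], ?_, ?_⟩
      · intro q hq
        rcases List.mem_cons.mp hq with h | h
        · subst h; rw [← hwe]; exact pal_rpc X hwrev
        · exact hpal q h
      · have : ¬ Even (p :: L).length := by
          simp [Nat.even_add_one, hpar]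
        rw [List.prod_cons, hprod, if_pos hpar, if_neg this]
        simp [List.prod_cons]
        group
    · -- L odd, p::L even: head = c⁻¹ * p * r⁻¹
      refine ⟨(c⁻¹ * p * r⁻¹) :: M, by simp [hlen], ?_, ?_⟩
      · intro q hq
        rcases List.mem_cons.mp hq with h | h
        · subst h; rw [← hwe]; exact pal_cpr X hwrev
        · exact hpal q h
      · have : Even (p :: L).length := by
          simp [Nat.even_add_one, hpar]
        rw [List.prod_cons, hprod, if_neg hpar, if_pos this]
        simp [List.prod_cons]
        group

lemma isPalindrome_inv {g : G} (h : IsPalindrome X g) : IsPalindrome X g⁻¹ := by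
  obtain ⟨w, hrev, he⟩ := h
  have hrw : (w.map fun l => (l.1, !l.2)).reverse = w.map fun l => (l.1, !l.2) := by
    rw [← List.map_reverse, hrev]
  refine ⟨(w.map fun l => (l.1, !l.2)), hrw, ?_⟩
  rw [← he, ← evalWord_inv X w, hrw]

end Aux

/-- Any element conjugate to a product of `k ≥ 1` palindromes is a product of `k`
palindromes if `k` is even, and of `k + 1` palindromes if `k` is odd. -/
theorem isPalProd_of_conjugate {G : Type*} [Group G] {n : ℕ} (X : Fin n → G)
    (hX : Subgroup.closure (Set.range X) = ⊤) (k : ℕ) (hk : 1 ≤ k) (g a c : G)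
    (ha : IsPalProd X k a) (hg : g = c⁻¹ * a * c) :
    (Even k → IsPalProd X k g) ∧ (Odd k → IsPalProd X (k + 1) g) := by
  obtain ⟨u, hu⟩ := exists_word X hX c
  obtain ⟨f, hfpal, hfprod⟩ := ha
  set L : List G := List.ofFn f with hLdef
  have hLlen : L.length = k := by simp [hLdef]
  have hLpal : ∀ p ∈ L, IsPalindrome X p := by
    intro p hp
    rw [hLdef, List.mem_ofFn] at hp
    obtain ⟨i, rfl⟩ := hp
    exact hfpal i
  obtain ⟨M, hMlen, hMpal, hMprod⟩ := key X u L hLpal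
  rw [hLlen] at hMprod
  constructor
  · intro hke
    rw [if_pos hke, hfprod, hu, ← hg] at hMprod
    have hlen' : ∀ i : Fin k, (i : ℕ) < M.length := by
      intro i; rw [hMlen, hLlen]; exact i.isLt
    refine ⟨fun i => M[(i : ℕ)]'(hlen' i), ?_, ?_⟩
    · intro i; exact hMpal _ (List.getElem_mem _)
    · have : List.ofFn (fun i : Fin k => M[(i : ℕ)]'(hlen' i)) = M := by
        apply List.ext_getElem
        · simp [hMlen, hLlen]
        · intro i h1 h2; rw [List.getElem_ofFn]
      rw [this, hMprod]
  · intro hko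
    rw [if_neg (Nat.not_even_iff_odd.mpr hko), hfprod] at hMprod
    set M₂ : List G := (evalWord X u.reverse * c)⁻¹ :: M with hM2def
    have hM2len : M₂.length = k + 1 := by simp [hM2def, hMlen, hLlen]
    have hM2pal : ∀ q ∈ M₂, IsPalindrome X q := by
      intro q hq
      rcases List.mem_cons.mp hq with h | h
      · subst h
        apply isPalindrome_inv
        rw [← hu]
        exact pal_rc X u
      · exact hMpal q h
    have hM2prod : M₂.prod = g := by
      rw [hM2def, List.prod_cons, hMprod, hg, hu]
      group
    have hlen' : ∀ i : Fin (k+1), (i : ℕ) < M₂.length := by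
      intro i; rw [hM2len]; exact i.isLt
    refine ⟨fun i => M₂[(i : ℕ)]'(hlen' i), ?_, ?_⟩
    · intro i; exact hM2pal _ (List.getElem_mem _)
    · have : List.ofFn (fun i : Fin (k+1) => M₂[(i : ℕ)]'(hlen' i)) = M₂ := by
        apply List.ext_getElem
        · simp [hM2len]
        · intro i h1 h2; rw [List.getElem_ofFn]
      rw [this, hM2prod]
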